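/- Let N ∈ (1,∞) and K ∈ ℝ. A continuous function h : I → (0,∞) on an interval I satisfies the midpoint inequality h((t₀+t₁)/2)^{1/(N−1)} ≥ σ_{K,N−1}^{(1/2)}(t₁−t₀)[h(t₀)^{1/(N−1)} + h(t₁)^{1/(N−1)}] for all t₀ < t₁ in I, if and only if it satisfies the full convexity inequality h((1−s)t₀+s t₁)^{1/(N−1)} ≥ σ_{K,N−1}^{(1−s)}(t₁−t₀) h(t₀)^{1/(N−1)} + σ_{K,N−1}^{(s)}(t₁−t₀) h(t₁)^{1/(N−1)} for all t₀ < t₁ in I and all s ∈ [0,1]. -/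

import Mathlib

open scoped ENNReal

/-- The distortion coefficients σ_{K,N'}^{(s)}(θ), valued in [0,∞] (⊤ when Kθ² ≥ N'π²). -/
noncomputable def sigmaCoeff (K N' s θ : ℝ) : ℝ≥0∞ :=
  if N' * Real.pi ^ 2 ≤ K * θ ^ 2 then ⊤
  else if 0 < K * θ ^ 2 then
    ENNReal.ofReal (Real.sin (s * θ * Real.sqrt (K / N')) / Real.sin (θ * Real.sqrt (K / N')))
  else if K * θ ^ 2 = 0 then ENNReal.ofReal s
  else
    ENNReal.ofReal (Real.sinh (s * θ * Real.sqrt (-K / N')) / Real.sinh (θ * Real.sqrt (-K / N')))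

noncomputable def sigmaR (K N' s θ : ℝ) : ℝ :=
  if 0 < K then Real.sin (s * θ * Real.sqrt (K / N')) / Real.sin (θ * Real.sqrt (K / N'))
  else if K = 0 then s
  else Real.sinh (s * θ * Real.sqrt (-K / N')) / Real.sinh (θ * Real.sqrt (-K / N'))

lemma sigma_eq {K N' θ : ℝ} (hN : 0 < N') (hθ : 0 < θ) (hlt : K * θ ^ 2 < N' * Real.pi ^ 2)
    (s : ℝ) : sigmaCoeff K N' s θ = ENNReal.ofReal (sigmaR K N' s θ) := by
  have hθ2 : 0 < θ ^ 2 := by positivity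
  rw [sigmaCoeff, sigmaR, if_neg (not_le.2 hlt)]
  rcases lt_trichotomy K 0 with hK | hK | hK
  · rw [if_neg, if_neg, if_neg (lt_asymm hK), if_neg hK.ne]
    · exact (ne_of_lt (by nlinarith))
    · nlinarith
  · subst hK
    simp
  · rw [if_pos (by nlinarith), if_pos hK]

lemma sin_arg_pos {K N' θ : ℝ} (hN : 0 < N') (hθ : 0 < θ) (hlt : K * θ ^ 2 < N' * Real.pi ^ 2)
    (hK : 0 < K) : 0 < θ * Real.sqrt (K / N') ∧ θ * Real.sqrt (K / N') < Real.pi := by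
  have h1 : 0 < Real.sqrt (K / N') := Real.sqrt_pos.2 (div_pos hK hN)
  constructor
  · positivity
  · have hsq : (θ * Real.sqrt (K / N')) ^ 2 = θ ^ 2 * K / N' := by
      rw [mul_pow, Real.sq_sqrt (by positivity : (0:ℝ) ≤ K / N')]; ring
    refine lt_of_pow_lt_pow_left₀ 2 Real.pi_pos.le ?_
    rw [hsq, div_lt_iff₀ hN]; nlinarith

lemma sigma_nonneg {K N' θ : ℝ} (hN : 0 < N') (hθ : 0 < θ) (hlt : K * θ ^ 2 < N' * Real.pi ^ 2)
    {s : ℝ} (hs0 : 0 ≤ s) (hs1 : s ≤ 1) : 0 ≤ sigmaR K N' s θ := by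
  rw [sigmaR]
  split_ifs with hK hK0
  · obtain ⟨hp, hp'⟩ := sin_arg_pos hN hθ hlt hK
    have hden : 0 < Real.sin (θ * Real.sqrt (K / N')) := Real.sin_pos_of_pos_of_lt_pi hp hp'
    have hnum : 0 ≤ Real.sin (s * (θ * Real.sqrt (K / N'))) :=
      Real.sin_nonneg_of_nonneg_of_le_pi (by positivity)
        (le_trans (by nlinarith) hp'.le)
    rw [mul_assoc]
    exact div_nonneg hnum hden.le
  · exact hs0
  · have hKneg : K < 0 := lt_of_le_of_ne (not_lt.1 hK) hK0
    have h1 : 0 < Real.sqrt (-K / N') := Real.sqrt_pos.2 (div_pos (neg_pos.2 hKneg) hN)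
    exact div_nonneg (Real.sinh_nonneg_iff.2 (by positivity))
      (Real.sinh_nonneg_iff.2 (by positivity))

lemma sigma_zero (K N' θ : ℝ) : sigmaR K N' 0 θ = 0 := by
  rw [sigmaR]; split_ifs <;> simp

lemma sigma_one {K N' θ : ℝ} (hN : 0 < N') (hθ : 0 < θ) (hlt : K * θ ^ 2 < N' * Real.pi ^ 2) :
    sigmaR K N' 1 θ = 1 := by
  rw [sigmaR]
  split_ifs with hK hK0
  · obtain ⟨hp, hp'⟩ := sin_arg_pos hN hθ hlt hK
    rw [one_mul, div_self (Real.sin_pos_of_pos_of_lt_pi hp hp').ne']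
  · rfl
  · have hKneg : K < 0 := lt_of_le_of_ne (not_lt.1 hK) hK0
    have h1 : 0 < Real.sqrt (-K / N') := Real.sqrt_pos.2 (div_pos (neg_pos.2 hKneg) hN)
    rw [one_mul, div_self (Real.sinh_pos_iff.2 (by positivity)).ne']

lemma sigma_half_add {K N' θ : ℝ} (hN : 0 < N') (hθ : 0 < θ)
    (hlt : K * θ ^ 2 < N' * Real.pi ^ 2) {s s' : ℝ} (hss : s < s') (hd : s' - s ≤ 1) :
    sigmaR K N' (1/2) ((s' - s) * θ) * (sigmaR K N' s θ + sigmaR K N' s' θ)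
      = sigmaR K N' ((s + s') / 2) θ := by
  rcases lt_trichotomy K 0 with hK | hK | hK
  · simp only [sigmaR, if_neg (lt_asymm hK), if_neg hK.ne]
    set c := Real.sqrt (-K / N') with hc
    have hcpos : 0 < c := Real.sqrt_pos.2 (div_pos (neg_pos.2 hK) hN)
    set α := θ * c with hα
    have hαpos : 0 < α := by positivity
    set a := (s + s') * α / 2 with ha
    set b := (s' - s) * α / 2 with hb
    have hbpos : 0 < b := by
      have : 0 < s' - s := by linarith
      positivity
    rw [show 1/2 * ((s' - s) * θ) * c = b by rw [hb, hα]; ring,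
        show (s' - s) * θ * c = 2 * b by rw [hb, hα]; ring,
        show s * θ * c = a - b by rw [ha, hb, hα]; ring,
        show s' * θ * c = a + b by rw [ha, hb, hα]; ring,
        show (s + s') / 2 * θ * c = a by rw [ha, hα]; ring]
    have hsb : (0:ℝ) < Real.sinh b := Real.sinh_pos_iff.2 hbpos
    have hcb : (0:ℝ) < Real.cosh b := Real.cosh_pos b
    have hsα : (0:ℝ) < Real.sinh α := Real.sinh_pos_iff.2 hαpos
    have h2b : Real.sinh (2 * b) = 2 * Real.sinh b * Real.cosh b := by
      rw [two_mul, Real.sinh_add]; ring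
    have hsum : Real.sinh (a - b) + Real.sinh (a + b)
        = 2 * Real.sinh a * Real.cosh b := by
      rw [Real.sinh_add, Real.sinh_sub]; ring
    rw [← add_div, hsum, h2b]
    field_simp
  · subst hK
    simp only [sigmaR, if_neg (lt_irrefl (0:ℝ)), if_pos rfl, if_true]
    ring
  · simp only [sigmaR, if_pos hK]
    set c := Real.sqrt (K / N') with hc
    obtain ⟨hαpos, hαlt⟩ := sin_arg_pos hN hθ hlt hK
    set α := θ * c with hα
    set a := (s + s') * α / 2 with ha
    set b := (s' - s) * α / 2 with hb
    have hbpos : 0 < b := by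
      have : 0 < s' - s := by linarith
      positivity
    have hblt : b < Real.pi / 2 := by
      have : b ≤ α / 2 := by
        rw [hb]
        have := hαpos
        nlinarith
      linarith
    rw [show 1/2 * ((s' - s) * θ) * c = b by rw [hb, hα]; ring,
        show (s' - s) * θ * c = 2 * b by rw [hb, hα]; ring,
        show s * θ * c = a - b by rw [ha, hb, hα]; ring,
        show s' * θ * c = a + b by rw [ha, hb, hα]; ring,
        show (s + s') / 2 * θ * c = a by rw [ha, hα]; ring]
    have hsb : (0:ℝ) < Real.sin b :=
      Real.sin_pos_of_pos_of_lt_pi hbpos (by linarith [Real.pi_pos])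
    have hcb : (0:ℝ) < Real.cos b :=
      Real.cos_pos_of_mem_Ioo ⟨by linarith [Real.pi_pos], hblt⟩
    have hsα : (0:ℝ) < Real.sin α := Real.sin_pos_of_pos_of_lt_pi hαpos hαlt
    have h2b : Real.sin (2 * b) = 2 * Real.sin b * Real.cos b := Real.sin_two_mul b
    have hsum : Real.sin (a - b) + Real.sin (a + b) = 2 * Real.sin a * Real.cos b := by
      rw [Real.sin_add, Real.sin_sub]; ring
    rw [← add_div, hsum, h2b]
    field_simp

lemma sigma_cont (K N' θ : ℝ) : Continuous fun s => sigmaR K N' s θ := by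
  unfold sigmaR
  split_ifs with hK hK0
  · exact (Real.continuous_sin.comp (by fun_prop)).div_const _
  · exact continuous_id
  · exact (Real.continuous_sinh.comp (by fun_prop)).div_const _

lemma midpoint_real {K N : ℝ} (hN : 1 < N) {I : Set ℝ} (hI : Convex ℝ I) {h : ℝ → ℝ}
    (hpos : ∀ t ∈ I, 0 < h t)
    (H : ∀ t₀ ∈ I, ∀ t₁ ∈ I, t₀ < t₁ →
      sigmaCoeff K (N - 1) (1 / 2) (t₁ - t₀) *
          (ENNReal.ofReal (h t₀ ^ (1 / (N - 1))) + ENNReal.ofReal (h t₁ ^ (1 / (N - 1)))) ≤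
        ENNReal.ofReal (h ((t₀ + t₁) / 2) ^ (1 / (N - 1))))
    {a b : ℝ} (ha : a ∈ I) (hb : b ∈ I) (hab : a < b) :
    K * (b - a) ^ 2 < (N - 1) * Real.pi ^ 2 ∧
      sigmaR K (N - 1) (1/2) (b - a) * (h a ^ (1 / (N - 1)) + h b ^ (1 / (N - 1)))
        ≤ h ((a + b) / 2) ^ (1 / (N - 1)) := by
  have hN' : (0:ℝ) < N - 1 := by linarith
  have hmemI : (a + b) / 2 ∈ I := by
    have := hI ha hb (by norm_num : (0:ℝ) ≤ 1/2) (by norm_num : (0:ℝ) ≤ 1/2) (by norm_num)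
    rw [show (a + b) / 2 = (1/2 : ℝ) • a + (1/2 : ℝ) • b by simp [smul_eq_mul]; ring]
    exact this
  have hua : 0 < h a ^ (1 / (N - 1)) := Real.rpow_pos_of_pos (hpos a ha) _
  have hub : 0 ≤ h b ^ (1 / (N - 1)) := Real.rpow_nonneg (hpos b hb).le _
  have hum : 0 ≤ h ((a + b) / 2) ^ (1 / (N - 1)) := Real.rpow_nonneg (hpos _ hmemI).le _
  have hth := H a ha b hb hab
  have hfin : K * (b - a) ^ 2 < (N - 1) * Real.pi ^ 2 := by
    by_contra hcon
    push_neg at hcon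
    rw [sigmaCoeff, if_pos hcon, ENNReal.top_mul
      (ne_of_gt (lt_of_lt_of_le (ENNReal.ofReal_pos.2 hua) le_self_add))] at hth
    simp at hth
  refine ⟨hfin, ?_⟩
  rw [sigma_eq hN' (by linarith : (0:ℝ) < b - a) hfin,
    ← ENNReal.ofReal_add hua.le hub, ← ENNReal.ofReal_mul
      (sigma_nonneg hN' (by linarith) hfin (by norm_num) (by norm_num))] at hth
  exact (ENNReal.ofReal_le_ofReal_iff hum).1 hth

lemma key_real {K N : ℝ} (hN : 1 < N) {I : Set ℝ} (hI : Convex ℝ I) {h : ℝ → ℝ}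
    (hc : ContinuousOn h I) (hpos : ∀ t ∈ I, 0 < h t)
    (M : ∀ a ∈ I, ∀ b ∈ I, a < b →
      K * (b - a) ^ 2 < (N - 1) * Real.pi ^ 2 ∧
      sigmaR K (N - 1) (1/2) (b - a) * (h a ^ (1 / (N - 1)) + h b ^ (1 / (N - 1)))
        ≤ h ((a + b) / 2) ^ (1 / (N - 1)))
    {t₀ t₁ : ℝ} (h0 : t₀ ∈ I) (h1 : t₁ ∈ I) (h01 : t₀ < t₁) {r : ℝ}
    (hr : r ∈ Set.Icc (0:ℝ) 1) :
    sigmaR K (N - 1) (1 - r) (t₁ - t₀) * h t₀ ^ (1 / (N - 1)) +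
        sigmaR K (N - 1) r (t₁ - t₀) * h t₁ ^ (1 / (N - 1))
      ≤ h ((1 - r) * t₀ + r * t₁) ^ (1 / (N - 1)) := by
  have hN' : (0:ℝ) < N - 1 := by linarith
  have hθ : (0:ℝ) < t₁ - t₀ := by linarith
  have hKθ := (M t₀ h0 t₁ h1 h01).1
  have mem : ∀ q ∈ Set.Icc (0:ℝ) 1, (1 - q) * t₀ + q * t₁ ∈ I := by
    intro q hq
    have := hI h0 h1 (by linarith [hq.2] : (0:ℝ) ≤ 1 - q) hq.1 (by ring)
    simpa [smul_eq_mul] using this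
  have hKθ' : ∀ q : ℝ, 0 < q → q ≤ 1 → K * (q * (t₁ - t₀)) ^ 2 < (N - 1) * Real.pi ^ 2 := by
    intro q hq0 hq1
    rcases le_or_gt K 0 with hK | hK
    · have h1 : K * (q * (t₁ - t₀)) ^ 2 ≤ 0 := mul_nonpos_of_nonpos_of_nonneg hK (sq_nonneg _)
      have h2 : (0:ℝ) < (N - 1) * Real.pi ^ 2 :=
        mul_pos hN' (by positivity)
      linarith
    · have hq2 : q ^ 2 ≤ 1 := by nlinarith
      have : K * (q * (t₁ - t₀)) ^ 2 ≤ K * (t₁ - t₀) ^ 2 := by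
        nlinarith [mul_nonneg (mul_nonneg hK.le (sub_nonneg.2 hq2)) (sq_nonneg (t₁ - t₀))]
      linarith
  set F : ℝ → ℝ := fun q => h ((1 - q) * t₀ + q * t₁) ^ (1 / (N - 1)) -
      (sigmaR K (N - 1) (1 - q) (t₁ - t₀) * h t₀ ^ (1 / (N - 1)) +
        sigmaR K (N - 1) q (t₁ - t₀) * h t₁ ^ (1 / (N - 1))) with hFdef
  have step : ∀ sa sb : ℝ, 0 ≤ sa → sa < sb → sb ≤ 1 →
      0 ≤ F sa → 0 ≤ F sb → 0 ≤ F ((sa + sb) / 2) := by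
    intro sa sb hsa0 hsab hsb1 Pa' Pb'
    rw [hFdef] at Pa' Pb' ⊢
    simp only at Pa' Pb' ⊢
    rw [sub_nonneg] at Pa' Pb' ⊢
    have hmemA : (1 - sa) * t₀ + sa * t₁ ∈ I := mem sa ⟨hsa0, by linarith⟩
    have hmemB : (1 - sb) * t₀ + sb * t₁ ∈ I := mem sb ⟨by linarith, hsb1⟩
    have hab : (1 - sa) * t₀ + sa * t₁ < (1 - sb) * t₀ + sb * t₁ := by nlinarith
    obtain ⟨-, hmid⟩ := M _ hmemA _ hmemB hab
    rw [show ((1 - sb) * t₀ + sb * t₁) - ((1 - sa) * t₀ + sa * t₁)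
        = (sb - sa) * (t₁ - t₀) by ring] at hmid
    rw [show (((1 - sa) * t₀ + sa * t₁) + ((1 - sb) * t₀ + sb * t₁)) / 2
        = (1 - (sa + sb) / 2) * t₀ + ((sa + sb) / 2) * t₁ by ring] at hmid
    have hc0 : 0 ≤ sigmaR K (N - 1) (1/2) ((sb - sa) * (t₁ - t₀)) :=
      sigma_nonneg hN' (by nlinarith) (hKθ' (sb - sa) (by linarith) (by linarith))
        (by norm_num) (by norm_num)
    have e1 := sigma_half_add hN' hθ hKθ hsab (by linarith)
    have e2 := sigma_half_add hN' hθ hKθ (show 1 - sb < 1 - sa by linarith)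
      (show (1 - sa) - (1 - sb) ≤ 1 by linarith)
    rw [show (1 - sa - (1 - sb)) * (t₁ - t₀) = (sb - sa) * (t₁ - t₀) by ring,
        show ((1 - sb) + (1 - sa)) / 2 = 1 - (sa + sb) / 2 by ring] at e2
    have hstep := mul_le_mul_of_nonneg_left (add_le_add Pa' Pb') hc0
    calc sigmaR K (N - 1) (1 - (sa + sb) / 2) (t₁ - t₀) * h t₀ ^ (1 / (N - 1)) +
          sigmaR K (N - 1) ((sa + sb) / 2) (t₁ - t₀) * h t₁ ^ (1 / (N - 1))
        = sigmaR K (N - 1) (1/2) ((sb - sa) * (t₁ - t₀)) *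
            ((sigmaR K (N - 1) (1 - sa) (t₁ - t₀) * h t₀ ^ (1 / (N - 1)) +
              sigmaR K (N - 1) sa (t₁ - t₀) * h t₁ ^ (1 / (N - 1))) +
             (sigmaR K (N - 1) (1 - sb) (t₁ - t₀) * h t₀ ^ (1 / (N - 1)) +
              sigmaR K (N - 1) sb (t₁ - t₀) * h t₁ ^ (1 / (N - 1)))) := by
          linear_combination (h t₀ ^ (1 / (N - 1))) * e2.symm + (h t₁ ^ (1 / (N - 1))) * e1.symm
      _ ≤ sigmaR K (N - 1) (1/2) ((sb - sa) * (t₁ - t₀)) *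
            (h ((1 - sa) * t₀ + sa * t₁) ^ (1 / (N - 1)) +
             h ((1 - sb) * t₀ + sb * t₁) ^ (1 / (N - 1))) := hstep
      _ ≤ _ := hmid
  have hP0 : 0 ≤ F 0 := by
    rw [hFdef]
    simp only [sub_zero, one_mul, zero_mul, mul_zero, add_zero]
    rw [sigma_one hN' hθ hKθ, sigma_zero]
    simp
  have hP1 : 0 ≤ F 1 := by
    rw [hFdef]
    simp only [sub_self, zero_mul, one_mul, zero_add]
    rw [sigma_one hN' hθ hKθ, sigma_zero]
    simp
  have dyadic : ∀ n : ℕ, ∀ k : ℕ, k ≤ 2 ^ n → 0 ≤ F ((k : ℝ) / 2 ^ n) := by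
    intro n
    induction n with
    | zero =>
      intro k hk
      interval_cases k
      · simpa using hP0
      · simpa using hP1
    | succ n ih =>
      intro k hk
      have h2n : (0:ℝ) < 2 ^ n := by positivity
      rcases Nat.even_or_odd k with ⟨m, hm⟩ | ⟨m, hm⟩
      · have hm2 : k = 2 * m := by omega
        have hmle : m ≤ 2 ^ n := by subst hm2; rw [pow_succ] at hk; omega
        have hcast : ((k : ℕ) : ℝ) / 2 ^ (n + 1) = (m : ℝ) / 2 ^ n := by
          subst hm2; push_cast [pow_succ]; field_simp
        rw [hcast]; exact ih m hmle
      · have hmle : m + 1 ≤ 2 ^ n := by subst hm; rw [pow_succ] at hk; omega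
        have hcast : ((k : ℕ) : ℝ) / 2 ^ (n + 1)
            = (((m : ℝ) / 2 ^ n) + (((m : ℝ) + 1) / 2 ^ n)) / 2 := by
          subst hm; push_cast [pow_succ]; field_simp; ring
        rw [hcast]
        have hb1 := ih m (by omega)
        have hb2 : 0 ≤ F (((m : ℝ) + 1) / 2 ^ n) := by
          have := ih (m + 1) hmle
          push_cast at this
          exact this
        refine step _ _ (by positivity) ?_ ?_ hb1 hb2
        · rw [div_lt_div_iff₀ h2n h2n]; nlinarith
        · rw [div_le_one h2n]
          calc ((m : ℝ) + 1) ≤ ((2 ^ n : ℕ) : ℝ) := by exact_mod_cast hmle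
            _ = 2 ^ n := by push_cast; ring
  -- density
  have hFcont : ContinuousOn F (Set.Icc 0 1) := by
    rw [hFdef]
    apply ContinuousOn.sub
    · apply ContinuousOn.rpow_const
      · exact hc.comp (Continuous.continuousOn (by fun_prop)) mem
      · intro x hx; exact Or.inl (ne_of_gt (hpos _ (mem x hx)))
    · apply ContinuousOn.add
      · exact (((sigma_cont K (N - 1) (t₁ - t₀)).comp
          (continuous_const.sub continuous_id)).mul continuous_const).continuousOn
      · exact ((sigma_cont K (N - 1) (t₁ - t₀)).mul continuous_const).continuousOn
  set seq : ℕ → ℝ := fun n => (⌊r * 2 ^ n⌋₊ : ℝ) / 2 ^ n with hseqdef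
  have h2n : ∀ n : ℕ, (0:ℝ) < 2 ^ n := fun n => by positivity
  have hkle : ∀ n, ⌊r * 2 ^ n⌋₊ ≤ 2 ^ n := by
    intro n
    calc ⌊r * 2 ^ n⌋₊ ≤ ⌊((2 ^ n : ℕ) : ℝ)⌋₊ :=
          Nat.floor_le_floor (by push_cast; nlinarith [hr.2, h2n n])
      _ = 2 ^ n := Nat.floor_natCast _
  have hseqmem : ∀ n, seq n ∈ Set.Icc (0:ℝ) 1 := by
    intro n
    rw [hseqdef]
    refine ⟨by positivity, ?_⟩
    rw [div_le_one (h2n n)]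
    calc ((⌊r * 2 ^ n⌋₊ : ℕ) : ℝ) ≤ ((2 ^ n : ℕ) : ℝ) := by exact_mod_cast hkle n
      _ = 2 ^ n := by push_cast; ring
  have hlow : ∀ n, r - (1/2 : ℝ) ^ n ≤ seq n := by
    intro n
    rw [hseqdef]
    simp only
    rw [le_div_iff₀ (h2n n)]
    have h1 : r * 2 ^ n < ⌊r * 2 ^ n⌋₊ + 1 := Nat.lt_floor_add_one _
    have h2 : (1/2 : ℝ) ^ n * 2 ^ n = 1 := by
      rw [← mul_pow]; norm_num
    nlinarith
  have hupp : ∀ n, seq n ≤ r := by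
    intro n
    rw [hseqdef]
    simp only
    rw [div_le_iff₀ (h2n n)]
    exact Nat.floor_le (by nlinarith [hr.1, h2n n])
  have htend : Filter.Tendsto seq Filter.atTop (nhds r) := by
    apply tendsto_of_tendsto_of_tendsto_of_le_of_le
      (g := fun n : ℕ => r - (1/2 : ℝ) ^ n) (h := fun _ : ℕ => r)
    · simpa using tendsto_const_nhds.sub
        (tendsto_pow_atTop_nhds_zero_of_lt_one (by norm_num : (0:ℝ) ≤ 1/2) (by norm_num))
    · exact tendsto_const_nhds
    · exact hlow
    · exact hupp
  have hFtend : Filter.Tendsto (F ∘ seq) Filter.atTop (nhds (F r)) :=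
    (hFcont r hr).tendsto.comp
      (tendsto_nhdsWithin_of_tendsto_nhds_of_eventually_within seq htend
        (Filter.Eventually.of_forall hseqmem))
  have hFr : 0 ≤ F r := by
    refine ge_of_tendsto hFtend (Filter.Eventually.of_forall fun n => ?_)
    exact dyadic n _ (hkle n)
  rw [hFdef] at hFr
  simp only at hFr
  linarith

/-- for a continuous positive density on an interval, the midpoint σ-concavity
inequality is equivalent to the full CD(K,N) convexity inequality. -/
theorem stmt_18 (K N : ℝ) (hN : 1 < N) (I : Set ℝ) (hI : Convex ℝ I)
    (h : ℝ → ℝ) (hc : ContinuousOn h I) (hpos : ∀ t ∈ I, 0 < h t) :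
    (∀ t₀ ∈ I, ∀ t₁ ∈ I, t₀ < t₁ →
      sigmaCoeff K (N - 1) (1 / 2) (t₁ - t₀) *
          (ENNReal.ofReal (h t₀ ^ (1 / (N - 1))) + ENNReal.ofReal (h t₁ ^ (1 / (N - 1)))) ≤
        ENNReal.ofReal (h ((t₀ + t₁) / 2) ^ (1 / (N - 1)))) ↔
    (∀ t₀ ∈ I, ∀ t₁ ∈ I, t₀ < t₁ → ∀ s ∈ Set.Icc (0:ℝ) 1,
      sigmaCoeff K (N - 1) (1 - s) (t₁ - t₀) * ENNReal.ofReal (h t₀ ^ (1 / (N - 1))) +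
          sigmaCoeff K (N - 1) s (t₁ - t₀) * ENNReal.ofReal (h t₁ ^ (1 / (N - 1))) ≤
        ENNReal.ofReal (h ((1 - s) * t₀ + s * t₁) ^ (1 / (N - 1)))) := by
  have hN' : (0:ℝ) < N - 1 := by linarith
  constructor
  · intro H t₀ h0 t₁ h1 h01 s hs
    have M : ∀ a ∈ I, ∀ b ∈ I, a < b →
        K * (b - a) ^ 2 < (N - 1) * Real.pi ^ 2 ∧
        sigmaR K (N - 1) (1/2) (b - a) * (h a ^ (1 / (N - 1)) + h b ^ (1 / (N - 1)))
          ≤ h ((a + b) / 2) ^ (1 / (N - 1)) :=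
      fun a ha b hb hab => midpoint_real hN hI hpos H ha hb hab
    have hθ : (0:ℝ) < t₁ - t₀ := by linarith
    have hKθ := (M t₀ h0 t₁ h1 h01).1
    have key := key_real hN hI hc hpos M h0 h1 h01 hs
    rw [sigma_eq hN' hθ hKθ, sigma_eq hN' hθ hKθ,
      ← ENNReal.ofReal_mul (sigma_nonneg hN' hθ hKθ (by linarith [hs.2]) (by linarith [hs.1])),
      ← ENNReal.ofReal_mul (sigma_nonneg hN' hθ hKθ hs.1 hs.2),
      ← ENNReal.ofReal_add
        (mul_nonneg (sigma_nonneg hN' hθ hKθ (by linarith [hs.2]) (by linarith [hs.1]))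
          (Real.rpow_nonneg (hpos t₀ h0).le _))
        (mul_nonneg (sigma_nonneg hN' hθ hKθ hs.1 hs.2)
          (Real.rpow_nonneg (hpos t₁ h1).le _))]
    exact ENNReal.ofReal_le_ofReal key
  · intro H t₀ h0 t₁ h1 h01
    have := H t₀ h0 t₁ h1 h01 (1/2) (by norm_num)
    rw [show (1:ℝ) - 1/2 = 1/2 by norm_num] at this
    rw [show (1/2:ℝ) * t₀ + 1/2 * t₁ = (t₀ + t₁) / 2 by ring] at this
    rw [mul_add]
    exact this
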